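/- For every positive integer n, there exists a bijection between the set 𝒜_3(n) of 3×n matrices with entries in {0,1,2} all of whose rows have the same valuation, and the set 𝒮(n) of words of length n over the alphabet {1,2,3,4,5,6,7} whose last letter lies in {1,2,3}. -/

import Mathlib

open Finset

/-- The valuation of a vector `a ∈ {0,1,2}^n`: `v(a) = ∑_{i=1}^n a_i · 2^(i-1)`. -/
def valu {n : ℕ} (a : Fin n → Fin 3) : ℕ :=
  ∑ i : Fin n, (a i : ℕ) * 2 ^ (i : ℕ)

def coeff (a b : ℤ) : ℕ :=
  if a = 0 ∧ b = 0 then 3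
  else if (a = 1 ∧ b = 0) ∨ (a = -1 ∧ b = 0) ∨ (a = 0 ∧ b = 1) ∨ (a = 0 ∧ b = -1)
        ∨ (a = 1 ∧ b = 1) ∨ (a = -1 ∧ b = -1) then 1
  else 0

abbrev Tri (n : ℕ) (s t : ℤ) :=
  {p : (Fin n → Fin 3) × (Fin n → Fin 3) × (Fin n → Fin 3) //
    (valu p.1 : ℤ) - valu p.2.1 = s * 2 ^ n ∧ (valu p.1 : ℤ) - valu p.2.2 = t * 2 ^ n}

def cnt (n : ℕ) (s t : ℤ) : ℕ := Fintype.card (Tri n s t)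

lemma valu_snoc {n : ℕ} (a : Fin n → Fin 3) (d : Fin 3) :
    valu (Fin.snoc a d) = valu a + (d : ℕ) * 2 ^ n := by
  simp [valu, Fin.sum_univ_castSucc]

def triEquiv (n : ℕ) (s t : ℤ) :
    Tri (n+1) s t ≃ Σ d : Fin 3 × Fin 3 × Fin 3,
      Tri n (2*s - d.1 + d.2.1) (2*t - d.1 + d.2.2) where
  toFun p := ⟨(p.1.1 (Fin.last n), p.1.2.1 (Fin.last n), p.1.2.2 (Fin.last n)),
    ⟨(Fin.init p.1.1, Fin.init p.1.2.1, Fin.init p.1.2.2), by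
      obtain ⟨⟨a, b, c⟩, h1, h2⟩ := p
      have key : ∀ x : Fin (n+1) → Fin 3,
          (valu x : ℤ) = valu (Fin.init x) + (x (Fin.last n) : ℕ) * 2 ^ n := by
        intro x
        have : valu x = valu (Fin.init x) + (x (Fin.last n) : ℕ) * 2 ^ n := by
          conv_lhs => rw [← Fin.snoc_init_self x]
          rw [valu_snoc]
        exact_mod_cast congrArg (Nat.cast : ℕ → ℤ) this
      have ha := key a
      have hb := key b
      have hc := key c
      constructor
      · push_cast at *; linear_combination h1 - ha + hb
      · push_cast at *; linear_combination h2 - ha + hc⟩⟩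
  invFun q := ⟨(Fin.snoc q.2.1.1 q.1.1, Fin.snoc q.2.1.2.1 q.1.2.1, Fin.snoc q.2.1.2.2 q.1.2.2), by
    obtain ⟨⟨da, db, dc⟩, ⟨a, b, c⟩, h1, h2⟩ := q
    constructor
    · rw [valu_snoc, valu_snoc]; push_cast at *; linear_combination h1
    · rw [valu_snoc, valu_snoc]; push_cast at *; linear_combination h2⟩
  left_inv p := by
    apply Subtype.ext
    obtain ⟨⟨a, b, c⟩, h⟩ := p
    simp [Fin.snoc_init_self]
  right_inv q := by
    obtain ⟨⟨da, db, dc⟩, ⟨a, b, c⟩, h⟩ := q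
    apply Sigma.ext
    · simp
    · rw [Subtype.heq_iff_coe_eq]
      · simp
      · intro x; simp

lemma cnt_succ_sum (n : ℕ) (s t : ℤ) :
    cnt (n+1) s t = ∑ d : Fin 3 × Fin 3 × Fin 3,
      cnt n (2*s - d.1 + d.2.1) (2*t - d.1 + d.2.2) := by
  rw [cnt, Fintype.card_congr (triEquiv n s t), Fintype.card_sigma]
  rfl
lemma cnt_zero (s t : ℤ) : cnt 0 s t = if s = 0 ∧ t = 0 then 1 else 0 := by
  rw [cnt]
  split_ifs with h
  · obtain ⟨rfl, rfl⟩ := h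
    rw [Fintype.card_eq_one_iff]
    refine ⟨⟨(Fin.elim0, Fin.elim0, Fin.elim0), by simp [valu]⟩, ?_⟩
    rintro ⟨⟨a, b, c⟩, -⟩
    apply Subtype.ext
    refine Prod.ext ?_ (Prod.ext ?_ ?_) <;> funext i <;> exact i.elim0
  · rw [Fintype.card_eq_zero_iff]
    constructor
    rintro ⟨⟨a, b, c⟩, h1, h2⟩
    simp [valu] at h1 h2
    exact h (by omega)

lemma coeff_big {a b : ℤ} (h : 2 ≤ a ∨ a ≤ -2 ∨ 2 ≤ b ∨ b ≤ -2) : coeff a b = 0 := by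
  unfold coeff; split_ifs <;> omega

lemma key1 (s t : ℤ) :
    ∑ d : Fin 3 × Fin 3 × Fin 3,
      (if 2*s - (d.1:ℤ) + (d.2.1:ℤ) = 0 ∧ 2*t - (d.1:ℤ) + (d.2.2:ℤ) = 0 then 1 else 0)
      = coeff s t := by
  by_cases hb : 2 ≤ s ∨ s ≤ -2 ∨ 2 ≤ t ∨ t ≤ -2
  · rw [coeff_big hb, Finset.sum_eq_zero]
    rintro ⟨d1, d2, d3⟩ -
    have h1 : (d1 : ℤ) ≤ 2 ∧ 0 ≤ (d1:ℤ) := ⟨by exact_mod_cast Fin.is_le d1, by positivity⟩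
    have h2 : (d2 : ℤ) ≤ 2 ∧ 0 ≤ (d2:ℤ) := ⟨by exact_mod_cast Fin.is_le d2, by positivity⟩
    have h3 : (d3 : ℤ) ≤ 2 ∧ 0 ≤ (d3:ℤ) := ⟨by exact_mod_cast Fin.is_le d3, by positivity⟩
    split_ifs with h
    · omega
    · rfl
  · push_neg at hb
    obtain ⟨hb1, hb2, hb3, hb4⟩ := hb
    interval_cases s <;> interval_cases t <;> decide
lemma key2 (s t : ℤ) :
    ∑ d : Fin 3 × Fin 3 × Fin 3,
      coeff (2*s - (d.1:ℤ) + (d.2.1:ℤ)) (2*t - (d.1:ℤ) + (d.2.2:ℤ))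
      = 7 * coeff s t := by
  by_cases hb : 2 ≤ s ∨ s ≤ -2 ∨ 2 ≤ t ∨ t ≤ -2
  · rw [coeff_big hb, Nat.mul_zero, Finset.sum_eq_zero]
    rintro ⟨d1, d2, d3⟩ -
    have h1 : (d1 : ℤ) ≤ 2 ∧ 0 ≤ (d1:ℤ) := ⟨by exact_mod_cast Fin.is_le d1, by positivity⟩
    have h2 : (d2 : ℤ) ≤ 2 ∧ 0 ≤ (d2:ℤ) := ⟨by exact_mod_cast Fin.is_le d2, by positivity⟩
    have h3 : (d3 : ℤ) ≤ 2 ∧ 0 ≤ (d3:ℤ) := ⟨by exact_mod_cast Fin.is_le d3, by positivity⟩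
    apply coeff_big
    omega
  · push_neg at hb
    obtain ⟨hb1, hb2, hb3, hb4⟩ := hb
    interval_cases s <;> interval_cases t <;> decide
lemma cnt_formula : ∀ (n : ℕ) (s t : ℤ), cnt (n+1) s t = coeff s t * 7 ^ n := by
  intro n
  induction n with
  | zero =>
    intro s t
    rw [cnt_succ_sum, pow_zero, Nat.mul_one, ← key1 s t]
    refine Finset.sum_congr rfl fun d _ => ?_
    rw [cnt_zero]
  | succ n ih =>
    intro s t
    rw [cnt_succ_sum]
    have : ∀ d : Fin 3 × Fin 3 × Fin 3,
        cnt (n+1) (2*s - (d.1:ℤ) + (d.2.1:ℤ)) (2*t - (d.1:ℤ) + (d.2.2:ℤ))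
        = coeff (2*s - (d.1:ℤ) + (d.2.1:ℤ)) (2*t - (d.1:ℤ) + (d.2.2:ℤ)) * 7 ^ n :=
      fun d => ih _ _
    rw [Finset.sum_congr rfl fun d _ => this d, ← Finset.sum_mul, key2, pow_succ]
    ring
def matEquiv (n : ℕ) :
    {M : Matrix (Fin 3) (Fin n) (Fin 3) // ∀ i j, valu (M i) = valu (M j)} ≃ Tri n 0 0 where
  toFun M := ⟨(M.1 0, M.1 1, M.1 2),
    ⟨by show (valu (M.1 0) : ℤ) - valu (M.1 1) = 0 * 2 ^ n; rw [M.2 0 1]; ring,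
     by show (valu (M.1 0) : ℤ) - valu (M.1 2) = 0 * 2 ^ n; rw [M.2 0 2]; ring⟩⟩
  invFun p := ⟨![p.1.1, p.1.2.1, p.1.2.2], by
    obtain ⟨⟨a, b, c⟩, h1, h2⟩ := p
    simp only [zero_mul] at h1 h2
    have e1 : valu a = valu b := by
      have : (valu a : ℤ) = valu b := by linarith [h1]
      exact_mod_cast this
    have e2 : valu a = valu c := by
      have : (valu a : ℤ) = valu c := by linarith [h2]
      exact_mod_cast this
    have hval : ∀ k : Fin 3, valu ((![a, b, c] : Fin 3 → Fin n → Fin 3) k) = valu a := by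
      intro k
      fin_cases k
      · rfl
      · exact e1.symm
      · exact e2.symm
    intro i j
    rw [hval i, hval j]⟩
  left_inv M := by
    apply Subtype.ext
    funext i
    fin_cases i <;> rfl
  right_inv p := by
    apply Subtype.ext
    rfl
def wordEquiv (m : ℕ) :
    {w : Fin (m+1) → ℕ // (∀ i, w i ∈ Finset.Icc 1 7) ∧
        w ⟨m, Nat.lt_succ_self m⟩ ∈ ({1, 2, 3} : Set ℕ)} ≃ (Fin m → Fin 7) × Fin 3 where
  toFun w := ⟨fun j => ⟨w.1 ⟨(j : ℕ), by omega⟩ - 1, by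
      have := w.2.1 ⟨(j : ℕ), by omega⟩
      simp at this; omega⟩,
    ⟨w.1 ⟨m, Nat.lt_succ_self m⟩ - 1, by
      have h2 := w.2.2
      have h1 := w.2.1 ⟨m, Nat.lt_succ_self m⟩
      simp at h1 h2
      rcases h2 with h | h | h <;> omega⟩⟩
  invFun vl := ⟨fun i => if h : (i : ℕ) < m then (vl.1 ⟨i, h⟩ : ℕ) + 1 else (vl.2 : ℕ) + 1, by
    constructor
    · intro i
      by_cases h : (i : ℕ) < m
      · simp only [dif_pos h]
        have := (vl.1 ⟨i, h⟩).isLt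
        simp
      · simp only [dif_neg h]
        have := vl.2.isLt
        simp; omega
    · have hm : ¬ ((⟨m, Nat.lt_succ_self m⟩ : Fin (m+1)) : ℕ) < m := by simp
      simp only [dif_neg hm]
      have := vl.2.isLt
      simp
      omega⟩
  left_inv w := by
    apply Subtype.ext
    funext i
    by_cases h : (i : ℕ) < m
    · simp only [dif_pos h]
      have hw := w.2.1 i
      simp only [Finset.mem_Icc] at hw
      simp only [Fin.eta]
      omega
    · simp only [dif_neg h]
      obtain rfl : i = ⟨m, Nat.lt_succ_self m⟩ := by
        apply Fin.ext
        simp only []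
        have := i.isLt
        omega
      have hw := w.2.1 ⟨m, Nat.lt_succ_self m⟩
      simp only [Finset.mem_Icc] at hw
      omega
  right_inv vl := by
    refine Prod.ext ?_ ?_
    · funext j
      apply Fin.ext
      simp [j.isLt]
    · apply Fin.ext
      simp

/-- There is a bijection between the set `𝒜₃(n)` of `3 × n` matrices with entries in
`{0,1,2}` all of whose rows have the same valuation, and the set `𝒮(n)` of words of
length `n` over the alphabet `{1,…,7}` whose last letter lies in `{1,2,3}`. -/
theorem exists_bijection_A3_S (n : ℕ) (hn : 0 < n) :
    ∃ f : {M : Matrix (Fin 3) (Fin n) (Fin 3) // ∀ i j, valu (M i) = valu (M j)} →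
        {w : Fin n → ℕ // (∀ i, w i ∈ Finset.Icc 1 7) ∧
          w ⟨n - 1, by omega⟩ ∈ ({1, 2, 3} : Set ℕ)},
      Function.Bijective f := by
  obtain ⟨m, rfl⟩ : ∃ m, n = m + 1 := ⟨n - 1, by omega⟩
  have cardA : Fintype.card
      {M : Matrix (Fin 3) (Fin (m+1)) (Fin 3) // ∀ i j, valu (M i) = valu (M j)}
      = 3 * 7 ^ m := by
    rw [Fintype.card_congr (matEquiv (m+1))]
    have := cnt_formula m 0 0
    rw [cnt] at this
    rw [this]
    norm_num [coeff]
  have cardB : Fintype.card ((Fin m → Fin 7) × Fin 3) = 3 * 7 ^ m := by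
    simp [mul_comm]
  have e : {M : Matrix (Fin 3) (Fin (m+1)) (Fin 3) // ∀ i j, valu (M i) = valu (M j)}
      ≃ {w : Fin (m+1) → ℕ // (∀ i, w i ∈ Finset.Icc 1 7) ∧
          w ⟨m, Nat.lt_succ_self m⟩ ∈ ({1, 2, 3} : Set ℕ)} :=
    (Fintype.equivOfCardEq (cardA.trans cardB.symm)).trans (wordEquiv m).symm
  exact ⟨e, e.bijective⟩
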